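/- Let n be a positive integer and c a real number with c > 2n - 1. Then the integral over [1,∞)^n of the function (a_1,...,a_n) ↦ ∏_{1 ≤ i < j ≤ n} (a_i/a_j + a_j/a_i) · ∏_{i=1}^{n} a_i^{-c} (with respect to Lebesgue measure da_1 ⋯ da_n) is finite. -/

import Mathlib

open MeasureTheory
open Finset

private lemma pair_prod_sq (n : ℕ) (a : Fin n → ℝ) :
    (∏ i, ∏ j ∈ univ.filter (fun j => i < j), (2 * (a i * a j))) *
      (∏ i, ∏ j ∈ univ.filter (fun j => i < j), (2 * (a i * a j)))
    = ∏ i, (2 ^ (n-1) * a i ^ (2*(n-1))) := by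
  have hsym : (∏ i, ∏ j ∈ univ.filter (fun j => i < j), (2 * (a i * a j)))
      = ∏ i, ∏ j ∈ univ.filter (fun j => j < i), (2 * (a i * a j)) := by
    rw [Finset.prod_comm' (s' := fun j => univ.filter (fun i => i < j)) (t' := univ)
      (by intro i j; simp)]
    exact Finset.prod_congr rfl fun i _ => Finset.prod_congr rfl fun j _ => by ring
  nth_rewrite 1 [hsym]
  rw [← Finset.prod_mul_distrib]
  have hunion : ∀ i : Fin n, univ.filter (fun j => j < i) ∪ univ.filter (fun j => i < j)
      = univ.erase i := by
    intro i; ext j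
    simp only [mem_union, mem_filter, mem_univ, true_and, mem_erase, and_true]
    exact ⟨fun h => h.elim ne_of_lt ne_of_gt, Ne.lt_or_gt⟩
  have hstep : ∀ i : Fin n,
      (∏ j ∈ univ.filter (fun j => j < i), (2 * (a i * a j))) *
        ∏ j ∈ univ.filter (fun j => i < j), (2 * (a i * a j))
      = ∏ j ∈ univ.erase i, (2 * (a i * a j)) := by
    intro i
    rw [← Finset.prod_union (by simp [Finset.disjoint_filter]; exact fun j h1 => le_of_lt h1), hunion]
  simp_rw [hstep]
  have h2 : ∀ i : Fin n, ∏ j ∈ univ.erase i, (2 * (a i * a j))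
      = (2 * a i) ^ (n - 1) * ∏ j ∈ univ.erase i, a j := by
    intro i
    rw [show (fun j => 2 * (a i * a j)) = fun j => (2 * a i) * a j by funext j; ring]
    rw [Finset.prod_mul_distrib, Finset.prod_const, Finset.card_erase_of_mem (mem_univ i),
      Finset.card_univ, Fintype.card_fin]
  simp_rw [h2]
  rw [Finset.prod_mul_distrib]
  have h3 : (∏ i, ∏ j ∈ univ.erase i, a j) = ∏ i, a i ^ (n - 1) := by
    rw [Finset.prod_comm' (s' := fun j => univ.erase j) (t' := univ)
      (by intro i j; simp [ne_comm])]
    exact Finset.prod_congr rfl fun i _ => by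
      rw [Finset.prod_const, Finset.card_erase_of_mem (mem_univ i),
        Finset.card_univ, Fintype.card_fin]
  rw [h3, ← Finset.prod_mul_distrib]
  exact Finset.prod_congr rfl fun i _ => by rw [mul_pow, two_mul, pow_add]; ring

private lemma key_bound (n : ℕ) (a : Fin n → ℝ) (ha : ∀ i, 1 ≤ a i) :
    (∏ i, ∏ j ∈ univ.filter (fun j => i < j), (a i / a j + a j / a i))
    ≤ ∏ i, ((2:ℝ) ^ (n-1) * a i ^ (2*(n-1))) := by
  have hpos : ∀ i, (0:ℝ) < a i := fun i => lt_of_lt_of_le one_pos (ha i)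
  have hPQ : (∏ i, ∏ j ∈ univ.filter (fun j => i < j), (a i / a j + a j / a i))
      ≤ ∏ i, ∏ j ∈ univ.filter (fun j => i < j), (2 * (a i * a j)) := by
    refine Finset.prod_le_prod
      (fun i _ => Finset.prod_nonneg fun j _ => by
        have := hpos i; have := hpos j; positivity)
      (fun i _ => Finset.prod_le_prod
        (fun j _ => by have := hpos i; have := hpos j; positivity) (fun j _ => ?_))
    have h1 : a i / a j ≤ a i * a j :=
      (div_le_self (hpos i).le (ha j)).trans (le_mul_of_one_le_right (hpos i).le (ha j))
    have h2 : a j / a i ≤ a i * a j :=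
      (div_le_self (hpos j).le (ha i)).trans (le_mul_of_one_le_left (hpos j).le (ha i))
    linarith
  have h1Q : (1:ℝ) ≤ ∏ i, ∏ j ∈ univ.filter (fun j => i < j), (2 * (a i * a j)) := by
    have hin : ∀ i : Fin n, (1:ℝ) ≤ ∏ j ∈ univ.filter (fun j => i < j), (2 * (a i * a j)) := by
      intro i
      calc (1:ℝ) = ∏ _j ∈ univ.filter (fun j => i < j), (1:ℝ) := by simp
        _ ≤ _ := Finset.prod_le_prod (fun j _ => zero_le_one)
            (fun j _ => by nlinarith [ha i, ha j])
    calc (1:ℝ) = ∏ _i : Fin n, (1:ℝ) := by simp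
      _ ≤ _ := Finset.prod_le_prod (fun i _ => zero_le_one) (fun i _ => hin i)
  refine hPQ.trans ?_
  rw [← pair_prod_sq]
  exact le_mul_of_one_le_left (by linarith) h1Q

theorem stable_range_convergence (n : ℕ) (hn : 0 < n) (c : ℝ) (hc : 2 * (n : ℝ) - 1 < c) :
    IntegrableOn
      (fun a : Fin n → ℝ =>
        (∏ i, ∏ j ∈ Finset.univ.filter (fun j => i < j), (a i / a j + a j / a i)) *
          ∏ i, a i ^ (-c))
      (Set.univ.pi fun _ => Set.Ici (1 : ℝ)) volume := by
  have hcast : ((2 * (n - 1) : ℕ) : ℝ) = 2 * (n : ℝ) - 2 := by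
    push_cast [Nat.cast_sub hn]
    ring
  set e : ℝ := ((2 * (n - 1) : ℕ) : ℝ) - c with he
  have he1 : e < -1 := by rw [he, hcast]; linarith
  set G : ℝ → ℝ := (Set.Ici (1:ℝ)).indicator (fun t => (2:ℝ) ^ (n-1) * t ^ e) with hGdef
  have hG : Integrable G volume := by
    rw [hGdef, integrable_indicator_iff measurableSet_Ici]
    have : IntegrableOn (fun t : ℝ => t ^ e) (Set.Ici (1:ℝ)) volume :=
      (integrableOn_Ici_iff_integrableOn_Ioi (f := fun t : ℝ => t ^ e)).mpr (integrableOn_Ioi_rpow_of_lt he1 one_pos)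
    exact this.const_mul _
  have hg : Integrable (fun x : Fin n → ℝ => ∏ i, G (x i))
      ((volume : Measure (Fin n → ℝ)).restrict (Set.univ.pi fun _ => Set.Ici 1)) :=
    (Integrable.fintype_prod (fun _ : Fin n => hG)).restrict
  refine Integrable.mono' hg ?_ ?_
  · apply Measurable.aestronglyMeasurable
    apply Measurable.mul
    · exact Finset.measurable_prod _ fun i _ => Finset.measurable_prod _ fun j _ =>
        ((measurable_pi_apply i).div (measurable_pi_apply j)).add
          ((measurable_pi_apply j).div (measurable_pi_apply i))
    · exact Finset.measurable_prod _ fun i _ => by fun_prop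
  · refine ae_restrict_of_forall_mem (MeasurableSet.univ_pi fun _ => measurableSet_Ici) ?_
    intro x hx
    have hx1 : ∀ i, 1 ≤ x i := fun i => hx i (Set.mem_univ i)
    have hxpos : ∀ i, (0:ℝ) < x i := fun i => lt_of_lt_of_le one_pos (hx1 i)
    have hPn : (0:ℝ) ≤ ∏ i, ∏ j ∈ univ.filter (fun j => i < j), (x i / x j + x j / x i) :=
      Finset.prod_nonneg fun i _ => Finset.prod_nonneg fun j _ => by
        have := hxpos i; have := hxpos j; positivity
    have hRn : (0:ℝ) ≤ ∏ i, x i ^ (-c) :=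
      Finset.prod_nonneg fun i _ => Real.rpow_nonneg (hxpos i).le _
    rw [Real.norm_of_nonneg (mul_nonneg hPn hRn)]
    calc (∏ i, ∏ j ∈ univ.filter (fun j => i < j), (x i / x j + x j / x i)) * ∏ i, x i ^ (-c)
        ≤ (∏ i, ((2:ℝ) ^ (n-1) * x i ^ (2*(n-1)))) * ∏ i, x i ^ (-c) :=
          mul_le_mul_of_nonneg_right (key_bound n x hx1) hRn
      _ = ∏ i, ((2:ℝ) ^ (n-1) * x i ^ e) := by
          rw [← Finset.prod_mul_distrib]
          refine Finset.prod_congr rfl fun i _ => ?_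
          rw [he, sub_eq_add_neg, Real.rpow_add (hxpos i), Real.rpow_natCast]
          ring
      _ = ∏ i, G (x i) :=
          Finset.prod_congr rfl fun i _ =>
            (Set.indicator_of_mem (show x i ∈ Set.Ici 1 from hx1 i)
              (fun t => (2:ℝ) ^ (n-1) * t ^ e)).symm
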